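/- Let R be a commutative ring and let α, β ∈ MvPolynomial (Fin n) ℤ have the same set of variables (MvPolynomial.vars α = MvPolynomial.vars β). Then the evaluations of the ring terms α* and β* in the ⊥-enlargement of R agree under every valuation σ : Fin n → Option R if and only if α and β induce the same polynomial function on R, i.e., for every τ : Fin n → R the evaluations of α and β at τ (mapping coefficients through the canonical ring map ℤ → R) are equal. -/

import Mathlib

universe u

/-- Ring-with-`⊥` terms in `n` variables: variables, constants `0`, `1` and `⊥`,
negation, addition and multiplication.  Terms avoiding the constructor `bot`
are the ring terms. -/
inductive RTerm (n : ℕ) : Type where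
  | var : Fin n → RTerm n
  | zero : RTerm n
  | one : RTerm n
  | bot : RTerm n
  | neg : RTerm n → RTerm n
  | add : RTerm n → RTerm n → RTerm n
  | mul : RTerm n → RTerm n → RTerm n

namespace RTerm

/-- Addition on the `⊥`-enlargement `Option R` of a commutative ring `R`. -/
def bAdd {R : Type u} [CommRing R] : Option R → Option R → Option R
  | some a, some b => some (a + b)
  | _, _ => none

/-- Multiplication on the `⊥`-enlargement `Option R` of a commutative ring `R`. -/
def bMul {R : Type u} [CommRing R] : Option R → Option R → Option R
  | some a, some b => some (a * b)
  | _, _ => none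

/-- Negation on the `⊥`-enlargement `Option R` of a commutative ring `R`. -/
def bNeg {R : Type u} [CommRing R] : Option R → Option R
  | some a => some (-a)
  | none => none

/-- Evaluation of a ring-with-`⊥` term in the `⊥`-enlargement `Option R` of a
commutative ring `R`, under a valuation `σ : Fin n → Option R`. -/
def evalB {n : ℕ} {R : Type u} [CommRing R] (σ : Fin n → Option R) :
    RTerm n → Option R
  | var i => σ i
  | zero => some 0
  | one => some 1
  | bot => none
  | neg t => bNeg (t.evalB σ)
  | add t s => bAdd (t.evalB σ) (s.evalB σ)
  | mul t s => bMul (t.evalB σ) (s.evalB σ)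

/-- Derivability in equational logic from the axioms `E_wcr,⊥`: the least relation
containing all substitution instances of the eleven axioms that is reflexive,
symmetric, transitive and closed under the term-forming operations. -/
inductive DerivWcr {n : ℕ} : RTerm n → RTerm n → Prop
  | add_assoc (x y z : RTerm n) : DerivWcr ((x.add y).add z) (x.add (y.add z))
  | add_comm (x y : RTerm n) : DerivWcr (x.add y) (y.add x)
  | add_zero (x : RTerm n) : DerivWcr (x.add zero) x
  | add_neg (x : RTerm n) : DerivWcr (x.add x.neg) (zero.mul x)
  | mul_assoc (x y z : RTerm n) : DerivWcr (x.mul (y.mul z)) ((x.mul y).mul z)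
  | mul_comm (x y : RTerm n) : DerivWcr (x.mul y) (y.mul x)
  | one_mul (x : RTerm n) : DerivWcr (one.mul x) x
  | mul_add (x y z : RTerm n) : DerivWcr (x.mul (y.add z)) ((x.mul y).add (x.mul z))
  | neg_neg (x : RTerm n) : DerivWcr x.neg.neg x
  | zero_mul_add (x y : RTerm n) : DerivWcr (zero.mul (x.add y)) (zero.mul (x.mul y))
  | add_bot (x : RTerm n) : DerivWcr (x.add bot) bot
  | refl (x : RTerm n) : DerivWcr x x
  | symm {x y : RTerm n} : DerivWcr x y → DerivWcr y x
  | trans {x y z : RTerm n} : DerivWcr x y → DerivWcr y z → DerivWcr x z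
  | neg_congr {x y : RTerm n} : DerivWcr x y → DerivWcr x.neg y.neg
  | add_congr {x x' y y' : RTerm n} :
      DerivWcr x x' → DerivWcr y y' → DerivWcr (x.add y) (x'.add y')
  | mul_congr {x x' y y' : RTerm n} :
      DerivWcr x x' → DerivWcr y y' → DerivWcr (x.mul y) (x'.mul y')

/-- Term powers: `pow t 0 = 1`, `pow t 1 = t`, `pow t (k+1) = pow t k · t`. -/
def pow {n : ℕ} (t : RTerm n) : ℕ → RTerm n
  | 0 => one
  | 1 => t
  | k + 2 => (t.pow (k + 1)).mul t

/-- Numerals for natural numbers: `0`, `1`, `n+1 = n + 1`. -/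
def natNumeral (n : ℕ) : ℕ → RTerm n
  | 0 => zero
  | 1 => one
  | k + 2 => (natNumeral n (k + 1)).add one

/-- Numerals for integers, built from `0`, `1`, `+` and negation. -/
def intNumeral (n : ℕ) (c : ℤ) : RTerm n :=
  if 0 ≤ c then natNumeral n c.toNat else (natNumeral n (-c).toNat).neg

/-- The term `x₁^{d₁} ⋯ xₙ^{dₙ}` representing a monomial `d`. -/
def monTerm {n : ℕ} (d : Fin n →₀ ℕ) : RTerm n :=
  ((List.finRange n).map fun i => (var i).pow (d i)).foldr mul one

/-- `polyTerm α` is the canonical ring term `α*` representing the integer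
multivariate polynomial `α`: the sum, over the monomials in the support of `α`,
of the numeral of the coefficient times the product of the variables raised to
their powers (and `0* = 0`). -/
noncomputable def polyTerm {n : ℕ} (α : MvPolynomial (Fin n) ℤ) : RTerm n :=
  (α.support.toList.map fun d => (intNumeral n (α.coeff d)).mul (monTerm d)).foldr add zero

variable {n : ℕ} {R : Type u} [CommRing R]

lemma bMul_some_some (a b : R) : bMul (some a) (some b) = some (a * b) := rfl
lemma bAdd_some_some (a b : R) : bAdd (some a) (some b) = some (a + b) := rfl

lemma bMul_none_right : ∀ x : Option R, bMul x none = none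
  | some _ => rfl
  | none => rfl

lemma bMul_none_left (x : Option R) : bMul none x = none := rfl

lemma bAdd_none_right : ∀ x : Option R, bAdd x none = none
  | some _ => rfl
  | none => rfl

lemma bAdd_none_left (x : Option R) : bAdd none x = none := rfl

lemma evalB_pow_some {σ : Fin n → Option R} {t : RTerm n} {a : R}
    (h : t.evalB σ = some a) : ∀ k, (t.pow k).evalB σ = some (a ^ k)
  | 0 => by simp [pow, evalB]
  | 1 => by simp [pow, h]
  | (k + 2) => by
      show bMul ((t.pow (k + 1)).evalB σ) (t.evalB σ) = _
      rw [evalB_pow_some h (k + 1), h, bMul_some_some, ← pow_succ]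

lemma evalB_pow_none {σ : Fin n → Option R} {t : RTerm n}
    (h : t.evalB σ = none) : ∀ k, k ≠ 0 → (t.pow k).evalB σ = none
  | 1, _ => by simpa [pow] using h
  | (k + 2), _ => by
      show bMul ((t.pow (k + 1)).evalB σ) (t.evalB σ) = none
      rw [h, bMul_none_right]

lemma evalB_natNumeral (σ : Fin n → Option R) : ∀ k : ℕ,
    (natNumeral n k).evalB σ = some ((k : ℕ) : R)
  | 0 => by simp [natNumeral, evalB]
  | 1 => by simp [natNumeral, evalB]
  | (k + 2) => by
      show bAdd ((natNumeral n (k + 1)).evalB σ) (evalB σ one) = _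
      rw [evalB_natNumeral σ (k + 1)]
      show some (((k + 1 : ℕ) : R) + 1) = _
      push_cast
      ring_nf

lemma evalB_intNumeral (σ : Fin n → Option R) (c : ℤ) :
    (intNumeral n c).evalB σ = some ((c : R)) := by
  rw [intNumeral]
  split_ifs with h
  · rw [evalB_natNumeral]
    rw [show ((c.toNat : ℕ) : R) = ((c.toNat : ℤ) : R) by push_cast; ring,
      Int.toNat_of_nonneg h]
  · show bNeg ((natNumeral n (-c).toNat).evalB σ) = _
    rw [evalB_natNumeral]
    show some (-(((-c).toNat : ℕ) : R)) = _
    rw [show (((-c).toNat : ℕ) : R) = (((-c).toNat : ℤ) : R) by push_cast; ring,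
      Int.toNat_of_nonneg (by omega : (0:ℤ) ≤ -c), Int.cast_neg, neg_neg]

lemma evalB_foldr_mul {ι : Type} {σ : Fin n → Option R} (f : ι → RTerm n) (g : ι → R) :
    ∀ l : List ι, (∀ i ∈ l, (f i).evalB σ = some (g i)) →
      ((l.map f).foldr mul one).evalB σ = some (l.map g).prod
  | [], _ => by simp [evalB]
  | (i :: l), h => by
      show bMul ((f i).evalB σ) (((l.map f).foldr mul one).evalB σ) = _
      rw [h i List.mem_cons_self,
        evalB_foldr_mul f g l (fun j hj => h j (List.mem_cons_of_mem _ hj)),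
        bMul_some_some, List.map_cons, List.prod_cons]

lemma evalB_foldr_add {ι : Type} {σ : Fin n → Option R} (f : ι → RTerm n) (g : ι → R) :
    ∀ l : List ι, (∀ i ∈ l, (f i).evalB σ = some (g i)) →
      ((l.map f).foldr add zero).evalB σ = some (l.map g).sum
  | [], _ => by simp [evalB]
  | (i :: l), h => by
      show bAdd ((f i).evalB σ) (((l.map f).foldr add zero).evalB σ) = _
      rw [h i List.mem_cons_self,
        evalB_foldr_add f g l (fun j hj => h j (List.mem_cons_of_mem _ hj)),
        bAdd_some_some, List.map_cons, List.sum_cons]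

lemma evalB_foldr_mul_none {σ : Fin n → Option R} :
    ∀ l : List (RTerm n), (∃ t ∈ l, t.evalB σ = none) →
      (l.foldr mul one).evalB σ = none
  | (t :: l), h => by
      show bMul (t.evalB σ) ((l.foldr mul one).evalB σ) = none
      rcases h with ⟨s, hs, hnone⟩
      rcases List.mem_cons.mp hs with rfl | hs
      · rw [hnone, bMul_none_left]
      · rw [evalB_foldr_mul_none l ⟨s, hs, hnone⟩, bMul_none_right]

lemma evalB_foldr_add_none {σ : Fin n → Option R} :
    ∀ l : List (RTerm n), (∃ t ∈ l, t.evalB σ = none) →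
      (l.foldr add zero).evalB σ = none
  | (t :: l), h => by
      show bAdd (t.evalB σ) ((l.foldr add zero).evalB σ) = none
      rcases h with ⟨s, hs, hnone⟩
      rcases List.mem_cons.mp hs with rfl | hs
      · rw [hnone, bAdd_none_left]
      · rw [evalB_foldr_add_none l ⟨s, hs, hnone⟩, bAdd_none_right]

lemma evalB_monTerm_some {σ : Fin n → Option R} {τ : Fin n → R} (d : Fin n →₀ ℕ)
    (h : ∀ i, d i ≠ 0 → σ i = some (τ i)) :
    (monTerm d).evalB σ = some (∏ i, τ i ^ d i) := by
  rw [monTerm, evalB_foldr_mul (fun i => (var i).pow (d i)) (fun i => τ i ^ d i)]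
  · rw [Fin.prod_univ_def]
  · intro i _
    by_cases hd : d i = 0
    · simp [hd, pow, evalB]
    · exact evalB_pow_some (show (var i).evalB σ = some (τ i) from h i hd) _

lemma evalB_monTerm_none {σ : Fin n → Option R} (d : Fin n →₀ ℕ) {i : Fin n}
    (hi : d i ≠ 0) (hσ : σ i = none) : (monTerm d).evalB σ = none := by
  apply evalB_foldr_mul_none
  exact ⟨(var i).pow (d i), List.mem_map_of_mem (List.mem_finRange i),
    evalB_pow_none (show (var i).evalB σ = none from hσ) _ hi⟩

lemma evalB_polyTerm_some {σ : Fin n → Option R} {τ : Fin n → R}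
    (α : MvPolynomial (Fin n) ℤ) (h : ∀ i ∈ α.vars, σ i = some (τ i)) :
    (polyTerm α).evalB σ =
      some (MvPolynomial.eval₂ (Int.castRingHom R) τ α) := by
  rw [polyTerm, evalB_foldr_add (fun d => (intNumeral n (α.coeff d)).mul (monTerm d))
      (fun d => ((α.coeff d : ℤ) : R) * ∏ i, τ i ^ d i) _ ?_]
  · congr 1
    rw [MvPolynomial.eval₂_eq', ← Finset.sum_map_toList]
    simp
  · intro d hd
    have hmon : (monTerm d).evalB σ = some (∏ i, τ i ^ d i) :=
      evalB_monTerm_some d (fun i hi => h i ((MvPolynomial.mem_vars _).mpr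
        ⟨d, Finset.mem_toList.mp hd, Finsupp.mem_support_iff.mpr hi⟩))
    show bMul ((intNumeral n (α.coeff d)).evalB σ) ((monTerm d).evalB σ) = _
    rw [evalB_intNumeral, hmon, bMul_some_some]

lemma evalB_polyTerm_none {σ : Fin n → Option R} (α : MvPolynomial (Fin n) ℤ)
    (h : ∃ i ∈ α.vars, σ i = none) : (polyTerm α).evalB σ = (none : Option R) := by
  obtain ⟨i, hiv, hσ⟩ := h
  obtain ⟨d, hd, hdi⟩ := (MvPolynomial.mem_vars _).mp hiv
  apply evalB_foldr_add_none
  refine ⟨(intNumeral n (α.coeff d)).mul (monTerm d),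
    List.mem_map_of_mem (Finset.mem_toList.mpr hd), ?_⟩
  show bMul ((intNumeral n (α.coeff d)).evalB σ) ((monTerm d).evalB σ) = none
  rw [evalB_monTerm_none d (Finsupp.mem_support_iff.mp hdi) hσ, bMul_none_right]

end RTerm

open RTerm in
/-- For a commutative ring `R` and integer polynomials `α, β` with the same set of
variables, `α*` and `β*` evaluate equally in the `⊥`-enlargement of `R` under
every valuation iff `α` and `β` induce the same polynomial function on `R`. -/
theorem polyTerm_eval_bot_iff_eval (n : ℕ) (R : Type u) [CommRing R]
    (α β : MvPolynomial (Fin n) ℤ) (hvars : α.vars = β.vars) :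
    (∀ σ : Fin n → Option R, (polyTerm α).evalB σ = (polyTerm β).evalB σ) ↔
      ∀ τ : Fin n → R,
        MvPolynomial.eval₂ (Int.castRingHom R) τ α =
          MvPolynomial.eval₂ (Int.castRingHom R) τ β := by
  constructor
  · intro h τ
    have := h (fun i => some (τ i))
    rw [evalB_polyTerm_some α (τ := τ) (fun i _ => rfl),
      evalB_polyTerm_some β (τ := τ) (fun i _ => rfl)] at this
    exact Option.some.inj this
  · intro h σ
    by_cases hc : ∃ i ∈ α.vars, σ i = none
    · rw [evalB_polyTerm_none α hc, evalB_polyTerm_none β (hvars ▸ hc)]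
    · push_neg at hc
      have hs : ∀ i ∈ α.vars, σ i = some ((σ i).getD 0) := by
        intro i hi
        rcases Option.ne_none_iff_exists'.mp (hc i hi) with ⟨r, hr⟩
        simp [hr]
      rw [evalB_polyTerm_some α hs, evalB_polyTerm_some β (hvars ▸ hs), h _]
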